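/- Let φ_t be a continuous flow on a metric space, μ a flow-invariant finite Borel measure, S a Borel subset, and δ > 0. Suppose ρ₀ ∈ S has a neighborhood U in S such that for every ρ ∈ U, the orbit segment {φ_t(ρ) : |t| ≤ δ} meets S only at ρ, and (t,ρ) ↦ φ_t(ρ) gives a homeomorphism of [−δ,δ] × U onto its image. Then on the flow box ⋃_{|t|≤δ} φ_t(U), μ decomposes as μ = dt ⊗ ν^⊥ with a transverse measure ν^⊥ on U; in particular for every Borel A ⊂ U and every 0 < T ≤ δ, ν^⊥(A) = (1/(2T))·μ(⋃_{|t|≤T} φ_t(A)). -/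

import Mathlib

open MeasureTheory Set Filter Topology

open scoped ENNReal NNReal

lemma stmt8_cauchy_linear (g : ℝ → ℝ≥0∞) (c : ℝ) (hc : 0 < c) (hfin : ∀ L, g L ≠ ⊤)
    (hadd : ∀ a b : ℝ, 0 ≤ a → 0 ≤ b → a + b ≤ c → g (a + b) = g a + g b) :
    ∀ L : ℝ, 0 ≤ L → L ≤ c → ENNReal.ofReal c * g L = ENNReal.ofReal L * g c := by
  set G : ℝ → ℝ := fun L => (g L).toReal with hGdef
  have hGadd : ∀ a b : ℝ, 0 ≤ a → 0 ≤ b → a + b ≤ c → G (a + b) = G a + G b := by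
    intro a b ha hb hab
    simp only [hGdef, hadd a b ha hb hab, ENNReal.toReal_add (hfin a) (hfin b)]
  have hGnn : ∀ L, 0 ≤ G L := fun L => ENNReal.toReal_nonneg
  have hGmono : ∀ x y : ℝ, 0 ≤ x → x ≤ y → y ≤ c → G x ≤ G y := by
    intro x y hx hxy hyc
    have h1 := hGadd x (y - x) hx (by linarith) (by linarith)
    have h2 : x + (y - x) = y := by ring
    rw [h2] at h1
    rw [h1]
    linarith [hGnn (y - x)]
  have hG0 : G 0 = 0 := by
    have h := hGadd 0 0 le_rfl le_rfl (by linarith)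
    norm_num at h
    linarith
  have hmul : ∀ n : ℕ, ∀ k : ℕ, k ≤ n → G (k * (c / n)) = k * G (c / n) := by
    intro n k hk
    induction k with
    | zero => simpa using hG0
    | succ k ih =>
      have hn1 : 1 ≤ n := le_trans (Nat.succ_le_succ (Nat.zero_le k)) hk
      have hnpos : (0 : ℝ) < n := by exact_mod_cast hn1
      have hcn : 0 ≤ c / n := by positivity
      have hkn : (k : ℝ) + 1 ≤ n := by exact_mod_cast hk
      have hle : (k : ℝ) * (c / n) + c / n ≤ c := by
        have : ((k : ℝ) + 1) * (c / n) ≤ (n : ℝ) * (c / n) := by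
          apply mul_le_mul_of_nonneg_right hkn hcn
        rw [mul_div_cancel₀ c (ne_of_gt hnpos)] at this
        linarith
      have h := hGadd ((k : ℝ) * (c / n)) (c / n) (by positivity) hcn hle
      have h2 : ((k : ℕ) + 1 : ℕ) * (c / n) = (k : ℝ) * (c / n) + c / n := by
        push_cast; ring
      rw [h2, h, ih (le_trans (Nat.le_succ k) hk)]
      push_cast; ring
  intro L hL hLc
  set q : ℝ := L / c with hq
  set M : ℝ := G c with hM
  have hMnn : 0 ≤ M := hGnn c
  have key : ∀ n : ℕ, 1 ≤ n → |G L - q * M| ≤ M / n := by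
    intro n hn
    have hnpos : (0 : ℝ) < n := by exact_mod_cast hn
    set u : ℝ := G (c / n) with hu
    have hunn : 0 ≤ u := hGnn _
    have hMu : M = n * u := by
      have h := hmul n n le_rfl
      rw [mul_div_cancel₀ c (ne_of_gt hnpos)] at h
      exact h
    set k : ℕ := ⌊L * n / c⌋₊ with hk
    have hfl : (k : ℝ) ≤ L * n / c := Nat.floor_le (by positivity)
    have hfl2 : L * n / c < (k : ℝ) + 1 := Nat.lt_floor_add_one _
    have hkn : k ≤ n := by
      have h1 : L * n / c ≤ n := by
        rw [div_le_iff₀ hc]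
        nlinarith
      have : (k : ℝ) ≤ (n : ℝ) := le_trans hfl h1
      exact_mod_cast this
    have hlow : (k : ℝ) * u ≤ G L := by
      have hkc : (k : ℝ) * c ≤ L * n := (le_div_iff₀ hc).mp hfl
      have h1 : (k : ℝ) * (c / n) ≤ L := by
        have he : (k : ℝ) * (c / n) = (k : ℝ) * c / n := by ring
        rw [he, div_le_iff₀ hnpos]
        nlinarith
      have h3 := hGmono ((k : ℝ) * (c / n)) L (by positivity) h1 hLc
      rwa [hmul n k hkn] at h3
    have hhigh : G L ≤ ((k : ℝ) + 1) * u := by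
      by_cases hcase : k + 1 ≤ n
      · have h1 : L ≤ ((k : ℝ) + 1) * (c / n) := by
          have h2 : L * n / c < (k : ℝ) + 1 := hfl2
          rw [div_lt_iff₀ hc] at h2
          have he : ((k : ℝ) + 1) * (c / n) = ((k : ℝ) + 1) * c / n := by ring
          rw [he, le_div_iff₀ hnpos]
          nlinarith
        have hbd : ((k : ℝ) + 1) * (c / n) ≤ c := by
          have hkn' : (k : ℝ) + 1 ≤ n := by exact_mod_cast hcase
          have := mul_le_mul_of_nonneg_right hkn' (by positivity : (0:ℝ) ≤ c / n)
          rwa [mul_div_cancel₀ c (ne_of_gt hnpos)] at this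
        have h3 := hGmono L (((k : ℝ) + 1) * (c / n)) hL h1 hbd
        have h4 : (((k : ℕ) + 1 : ℕ) : ℝ) * (c / n) = ((k : ℝ) + 1) * (c / n) := by push_cast; ring
        calc G L ≤ G (((k : ℝ) + 1) * (c / n)) := h3
          _ = G ((((k : ℕ) + 1 : ℕ) : ℝ) * (c / n)) := by rw [h4]
          _ = (((k : ℕ) + 1 : ℕ) : ℝ) * u := hmul n (k + 1) hcase
          _ = ((k : ℝ) + 1) * u := by push_cast; ring
      · have hkeq : k = n := le_antisymm hkn (by omega)
        have : G L ≤ M := hGmono L c hL hLc le_rfl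
        rw [hMu, hkeq] at *
        nlinarith
    have hqk : (k : ℝ) ≤ q * n := by
      have he : q * n = L * n / c := by rw [hq]; ring
      rw [he]
      exact hfl
    have hqk2 : q * n ≤ (k : ℝ) + 1 := by
      rw [hq]
      have : L / c * n = L * n / c := by ring
      rw [this]
      linarith
    have hqMval : q * M = (q * n) * u := by rw [hMu]; ring
    rw [hqMval]
    have hb1 : G L - q * n * u ≤ u := by nlinarith
    have hb2 : -(u) ≤ G L - q * n * u := by nlinarith
    have huM : u = M / n := by rw [hMu]; field_simp
    rw [← huM]
    exact abs_le.mpr ⟨by linarith, by linarith⟩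
  have hGL : G L = q * M := by
    by_contra hne
    have habs : 0 < |G L - q * M| := abs_pos.mpr (sub_ne_zero.mpr hne)
    obtain ⟨n, hn⟩ := exists_nat_gt (M / |G L - q * M|)
    have hn1 : 1 ≤ n := by
      by_contra h
      push_neg at h
      interval_cases n
      · have hp : 0 ≤ M / |G L - q * M| := by positivity
        simp at hn
        linarith
    have hnpos : (0 : ℝ) < n := by exact_mod_cast hn1
    have h1 := key n hn1
    have h2 : M / n < |G L - q * M| := by
      rw [div_lt_iff₀ hnpos]
      rw [div_lt_iff₀ habs] at hn
      nlinarith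
    linarith
  have hgl : g L = ENNReal.ofReal (G L) := (ENNReal.ofReal_toReal (hfin L)).symm
  have hgc : g c = ENNReal.ofReal (G c) := (ENNReal.ofReal_toReal (hfin c)).symm
  rw [hgl, hgc, ← ENNReal.ofReal_mul (le_of_lt hc), ← ENNReal.ofReal_mul hL]
  congr 1
  rw [hGL, hq, ← hM]
  field_simp

/-- flow-box disintegration: Let `φ` be a continuous flow on a metric space,
`μ` a flow-invariant finite Borel measure, `S` a Borel set and `δ > 0`.  Suppose `ρ₀ ∈ S`
has a neighborhood `U` of `ρ₀` in `S` such that for every `ρ ∈ U` the orbit segment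
`{φ_t(ρ) : |t| ≤ δ}` meets `S` only at `ρ`, and `(t,ρ) ↦ φ_t(ρ)` is a homeomorphism of
`[−δ,δ] × U` onto its image (encoded by injectivity and openness onto the image, the map
being automatically continuous).  Then `μ` decomposes on the flow box as `dt ⊗ ν^⊥` for a
transverse measure `ν^⊥` on `U`: in particular, for every Borel `A ⊆ U` and every
`0 < T ≤ δ`, `ν^⊥(A) = (1/(2T)) · μ(⋃_{|t|≤T} φ_t(A))`. -/
theorem stmt_8 {X : Type*} [MetricSpace X]
    [MeasurableSpace X] [BorelSpace X]
    (φ : Flow ℝ X) (μ : Measure X) [IsFiniteMeasure μ]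
    (hinv : ∀ t : ℝ, μ.map (φ.toFun t) = μ)
    (S : Set X) (hS : MeasurableSet S) (δ : ℝ) (hδ : 0 < δ)
    (ρ₀ : X) (hρ₀ : ρ₀ ∈ S) (U : Set X) (hUS : U ⊆ S)
    (hUnbhd : U ∈ nhdsWithin ρ₀ S)
    (honce : ∀ ρ ∈ U, ∀ t : ℝ, |t| ≤ δ → φ.toFun t ρ ∈ S → φ.toFun t ρ = ρ)
    (hinj : ∀ t₁ t₂ : ℝ, |t₁| ≤ δ → |t₂| ≤ δ → ∀ ρ₁ ∈ U, ∀ ρ₂ ∈ U,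
      φ.toFun t₁ ρ₁ = φ.toFun t₂ ρ₂ → t₁ = t₂ ∧ ρ₁ = ρ₂)
    (hopen : ∀ V : Set (ℝ × X), IsOpen V →
      ∃ W : Set X, IsOpen W ∧
        (fun p : ℝ × X => φ.toFun p.1 p.2) '' (V ∩ Icc (-δ) δ ×ˢ U) =
          W ∩ (fun p : ℝ × X => φ.toFun p.1 p.2) '' (Icc (-δ) δ ×ˢ U)) :
    ∃ νperp : Measure X,
      ∀ A : Set X, MeasurableSet A → A ⊆ U → ∀ T : ℝ, 0 < T → T ≤ δ →
        νperp A = ENNReal.ofReal (1 / (2 * T)) *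
          μ (⋃ t ∈ Icc (-T) T, φ.toFun t '' A) := by
  classical
  set Φ : ℝ × X → X := fun p : ℝ × X => φ.toFun p.1 p.2 with hΦdef
  set box : Set (ℝ × X) := Icc (-δ) δ ×ˢ U with hboxdef
  set Z : Set X := Φ '' box with hZdef
  -- basic flow facts
  have himpre : ∀ (t : ℝ) (E : Set X), φ.toFun t '' E = φ.toFun (-t) ⁻¹' E := by
    intro t E
    ext x
    constructor
    · rintro ⟨a, ha, rfl⟩
      have hcanc : φ.toFun (-t) (φ.toFun t a) = a := by
        rw [← φ.map_add', neg_add_cancel, φ.map_zero']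
      simpa [mem_preimage, hcanc] using ha
    · intro hx
      refine ⟨φ.toFun (-t) x, hx, ?_⟩
      rw [← φ.map_add', add_neg_cancel, φ.map_zero']
  have hφinvim : ∀ (t : ℝ) (E : Set X), μ (φ.toFun t '' E) = μ E := by
    intro t E
    rw [himpre]
    have h2 : μ (φ.toFun (-t) ⁻¹' E) = μ.map ((φ.toHomeomorph (-t)).toMeasurableEquiv) E :=
      ((φ.toHomeomorph (-t)).toMeasurableEquiv.map_apply E).symm
    rw [h2]
    have h3 : μ.map ((φ.toHomeomorph (-t)).toMeasurableEquiv) = μ.map (φ.toFun (-t)) := rfl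
    rw [h3, hinv]
  -- injectivity on the box
  have hΦinj : ∀ p ∈ box, ∀ q ∈ box, Φ p = Φ q → p = q := by
    rintro ⟨t₁, ρ₁⟩ hp ⟨t₂, ρ₂⟩ hq h
    obtain ⟨ht₁, hρ₁⟩ := hp
    obtain ⟨ht₂, hρ₂⟩ := hq
    obtain ⟨h1, h2⟩ := hinj t₁ t₂ (abs_le.mpr ht₁) (abs_le.mpr ht₂) ρ₁ hρ₁ ρ₂ hρ₂ h
    simp [Prod.ext_iff, h1, h2]
  -- images of disjoint subsets of the box are disjoint
  have himdisj : ∀ S₁ S₂ : Set (ℝ × X), S₁ ⊆ box → S₂ ⊆ box →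
      S₁ ∩ S₂ = ∅ → (Φ '' S₁) ∩ (Φ '' S₂) = ∅ := by
    intro S₁ S₂ h₁ h₂ hd
    ext x
    simp only [mem_inter_iff, mem_empty_iff_false, iff_false, not_and]
    rintro ⟨p, hp, rfl⟩ ⟨q, hq, hqx⟩
    have hqp : q = p := hΦinj q (h₂ hq) p (h₁ hp) hqx
    have : p ∈ S₁ ∩ S₂ := ⟨hp, hqp ▸ hq⟩
    rw [hd] at this
    exact this
  -- the separator lemma : images of measurable sets are traces of measurable sets on Z
  have hsep : ∀ G : Set (ℝ × X), MeasurableSet G →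
      ∃ C : Set X, MeasurableSet C ∧ Φ '' (G ∩ box) = C ∩ Z := by
    have hξex : ∀ z : ↥Z, ∃ p : ℝ × X, p ∈ box ∧ Φ p = (z : X) := fun z => z.2
    choose ξ hξbox hξΦ using hξex
    have hξuniq : ∀ (z : ↥Z) (p : ℝ × X), p ∈ box → Φ p = (z : X) → ξ z = p := by
      intro z p hp hpz
      exact hΦinj _ (hξbox z) _ hp (by rw [hξΦ z, hpz])
    have hξpre : ∀ V : Set (ℝ × X), ξ ⁻¹' V = Subtype.val ⁻¹' (Φ '' (V ∩ box)) := by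
      intro V
      ext z
      simp only [mem_preimage]
      constructor
      · intro hz
        exact ⟨ξ z, ⟨hz, hξbox z⟩, hξΦ z⟩
      · rintro ⟨p, ⟨hpV, hpbox⟩, hpz⟩
        rw [hξuniq z p hpbox hpz]
        exact hpV
    have hξcont : Continuous ξ := by
      rw [continuous_def]
      intro V hV
      obtain ⟨W, hWopen, hWeq⟩ := hopen V hV
      rw [hξpre V]
      rw [show Φ '' (V ∩ box) = W ∩ Z from hWeq]
      have hWZ : (Subtype.val ⁻¹' (W ∩ Z) : Set ↥Z) = Subtype.val ⁻¹' W := by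
        ext z
        simp [z.2]
      rw [hWZ]
      exact hWopen.preimage continuous_subtype_val
    intro G hG
    have hmeasp : MeasurableSet (ξ ⁻¹' G) := hξcont.measurable hG
    obtain ⟨C, hC, hCeq⟩ := MeasurableSpace.measurableSet_comap.mp hmeasp
    refine ⟨C, hC, ?_⟩
    have hsub : Φ '' (G ∩ box) ⊆ Z := image_mono inter_subset_right
    have h1 : Φ '' (G ∩ box) = Subtype.val '' (ξ ⁻¹' G) := by
      rw [hξpre G, Subtype.image_preimage_coe]
      exact (inter_eq_self_of_subset_right hsub).symm
    rw [h1, ← hCeq, Subtype.image_preimage_coe]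
    exact inter_comm _ _
  -- additivity of μ across an image of a measurable set
  have hsplit : ∀ G : Set (ℝ × X), MeasurableSet G → ∀ Q : Set X, Q ⊆ Z →
      Q ∩ Φ '' (G ∩ box) = ∅ → μ (Φ '' (G ∩ box) ∪ Q) = μ (Φ '' (G ∩ box)) + μ Q := by
    intro G hG Q hQZ hdisj
    obtain ⟨C, hC, hCeq⟩ := hsep G hG
    have hPC : Φ '' (G ∩ box) ⊆ C := by rw [hCeq]; exact inter_subset_left
    have hQC : Q ∩ C = ∅ := by
      ext x
      simp only [mem_inter_iff, mem_empty_iff_false, iff_false, not_and]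
      intro hxQ hxC
      have : x ∈ Φ '' (G ∩ box) := by rw [hCeq]; exact ⟨hxC, hQZ hxQ⟩
      have : x ∈ Q ∩ Φ '' (G ∩ box) := ⟨hxQ, this⟩
      rw [hdisj] at this
      exact this
    have key := measure_inter_add_diff (μ := μ) (Φ '' (G ∩ box) ∪ Q) hC
    have e1 : (Φ '' (G ∩ box) ∪ Q) ∩ C = Φ '' (G ∩ box) := by
      ext x
      constructor
      · rintro ⟨hx | hx, hxC⟩
        · exact hx
        · exfalso
          have : x ∈ Q ∩ C := ⟨hx, hxC⟩
          rw [hQC] at this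
          exact this
      · intro hx
        exact ⟨Or.inl hx, hPC hx⟩
    have e2 : (Φ '' (G ∩ box) ∪ Q) \ C = Q := by
      ext x
      constructor
      · rintro ⟨hx | hx, hxC⟩
        · exact absurd (hPC hx) hxC
        · exact hx
      · intro hx
        refine ⟨Or.inr hx, fun hxC => ?_⟩
        have : x ∈ Q ∩ C := ⟨hx, hxC⟩
        rw [hQC] at this
        exact this
    rw [e1, e2] at key
    exact key.symm
  -- countable additivity on images
  have hcadd : ∀ P : ℕ → Set X, (∀ n, ∃ G : Set (ℝ × X), MeasurableSet G ∧ P n = Φ '' (G ∩ box)) →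
      Pairwise (Function.onFun Disjoint P) → μ (⋃ n, P n) = ∑' n, μ (P n) := by
    have key : ∀ N : ℕ, ∀ P : ℕ → Set X,
        (∀ n, ∃ G : Set (ℝ × X), MeasurableSet G ∧ P n = Φ '' (G ∩ box)) →
        Pairwise (Function.onFun Disjoint P) → ∑ i ∈ Finset.range N, μ (P i) ≤ μ (⋃ n, P n) := by
      intro N
      induction N with
      | zero => intro P _ _; simp
      | succ N ih =>
        intro P hP hd
        obtain ⟨G₀, hG₀, hP₀⟩ := hP 0
        have hPZ : ∀ n, P n ⊆ Z := by
          intro n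
          obtain ⟨G, hG, hPe⟩ := hP n
          rw [hPe]
          exact image_mono inter_subset_right
        have hunion : (⋃ n, P n) = P 0 ∪ ⋃ n, P (n + 1) := by
          ext x
          simp only [mem_iUnion, mem_union]
          constructor
          · rintro ⟨n, hn⟩
            cases n with
            | zero => exact Or.inl hn
            | succ n => exact Or.inr ⟨n, hn⟩
          · rintro (h | ⟨n, hn⟩)
            exacts [⟨0, h⟩, ⟨n + 1, hn⟩]
        have hQZ : (⋃ n, P (n + 1)) ⊆ Z := iUnion_subset fun n => hPZ (n + 1)
        have hdisj0 : (⋃ n, P (n + 1)) ∩ Φ '' (G₀ ∩ box) = ∅ := by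
          rw [← hP₀]
          ext x
          simp only [mem_inter_iff, mem_iUnion, mem_empty_iff_false, iff_false, not_and]
          rintro ⟨n, hn⟩ h0
          exact Set.disjoint_left.mp (hd (Nat.succ_ne_zero n)) hn h0
        have hshift : Pairwise (Function.onFun Disjoint fun n => P (n + 1)) := by
          intro i j hij
          exact hd (by omega)
        calc ∑ i ∈ Finset.range (N + 1), μ (P i)
            = (∑ i ∈ Finset.range N, μ (P (i + 1))) + μ (P 0) := Finset.sum_range_succ' _ _
          _ ≤ μ (⋃ n, P (n + 1)) + μ (P 0) :=
              add_le_add_left (ih (fun n => P (n + 1)) (fun n => hP (n + 1)) hshift) _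
          _ = μ (P 0) + μ (⋃ n, P (n + 1)) := add_comm _ _
          _ = μ (Φ '' (G₀ ∩ box) ∪ ⋃ n, P (n + 1)) := by
              rw [hsplit G₀ hG₀ _ hQZ hdisj0, hP₀]
          _ = μ (⋃ n, P n) := by rw [hunion, hP₀]
    intro P hP hd
    refine le_antisymm (measure_iUnion_le P) ?_
    rw [ENNReal.tsum_eq_iSup_nat]
    exact iSup_le fun N => key N P hP hd
  -- construct the transverse measure
  refine ⟨Measure.ofMeasurable
    (fun s _ => ENNReal.ofReal (1 / (2 * δ)) * μ (Φ '' ((univ ×ˢ s) ∩ box))) ?_ ?_, ?_⟩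
  · simp
  · intro f hf hdisj
    have hUeq : (univ ×ˢ ⋃ i, f i) ∩ box = ⋃ i, ((univ ×ˢ f i) ∩ box) := by
      rw [prod_iUnion, iUnion_inter]
    have hPn : ∀ n, ∃ G : Set (ℝ × X), MeasurableSet G ∧
        Φ '' ((univ ×ˢ f n) ∩ box) = Φ '' (G ∩ box) :=
      fun n => ⟨univ ×ˢ f n, MeasurableSet.univ.prod (hf n), rfl⟩
    have hPdis : Pairwise (Function.onFun Disjoint fun n => Φ '' ((univ ×ˢ f n) ∩ box)) := by
      intro i j hij
      rw [Function.onFun, Set.disjoint_iff_inter_eq_empty]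
      apply himdisj _ _ inter_subset_right inter_subset_right
      rw [eq_empty_iff_forall_notMem]
      rintro p ⟨⟨⟨-, hpi⟩, -⟩, ⟨⟨-, hpj⟩, -⟩⟩
      exact Set.disjoint_left.mp (hdisj hij) hpi hpj
    show ENNReal.ofReal (1 / (2 * δ)) * μ (Φ '' ((univ ×ˢ ⋃ i, f i) ∩ box)) =
      ∑' (i : ℕ), ENNReal.ofReal (1 / (2 * δ)) * μ (Φ '' ((univ ×ˢ f i) ∩ box))
    rw [hUeq, image_iUnion, hcadd _ hPn hPdis, ENNReal.tsum_mul_left]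
  -- the defining property
  intro A hA hAU T hT hTδ
  rw [Measure.ofMeasurable_apply A hA]
  -- identify the tube over A
  have hprodbox : ∀ I : Set ℝ, I ⊆ Icc (-δ) δ → (I ×ˢ A) ∩ box = I ×ˢ A := by
    intro I hI
    rw [hboxdef, prod_inter_prod]
    rw [inter_eq_self_of_subset_left hI, inter_eq_self_of_subset_left hAU]
  have hAbox : (univ ×ˢ A) ∩ box = Icc (-δ) δ ×ˢ A := by
    rw [hboxdef, prod_inter_prod, univ_inter, inter_eq_self_of_subset_left hAU]
  -- μ A = 0
  have hA0 : μ A = 0 := by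
    by_contra hA0ne
    set tseq : ℕ → ℝ := fun n => δ / (n + 1) with htseq
    have htpos : ∀ n : ℕ, 0 < tseq n := by
      intro n
      apply div_pos hδ
      positivity
    have htle : ∀ n : ℕ, tseq n ≤ δ := by
      intro n
      rw [htseq]
      rw [div_le_iff₀ (by positivity : (0:ℝ) < (n:ℝ) + 1)]
      nlinarith [Nat.cast_nonneg (α := ℝ) n]
    have htinj : Function.Injective tseq := by
      intro i j hij
      simp only [htseq] at hij
      have hi : ((i:ℝ) + 1) ≠ 0 := by positivity
      have hj : ((j:ℝ) + 1) ≠ 0 := by positivity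
      rw [div_eq_div_iff (by positivity) (by positivity)] at hij
      have : (i : ℝ) = j := by
        have := mul_left_cancel₀ (ne_of_gt hδ) hij
        linarith
      exact_mod_cast this
    have hPmeas : ∀ n, MeasurableSet (φ.toFun (tseq n) '' A) := by
      intro n
      rw [himpre]
      exact (φ.continuous_toFun (-(tseq n))).measurable hA
    have hPdis : Pairwise (Function.onFun Disjoint fun n => φ.toFun (tseq n) '' A) := by
      intro i j hij
      rw [Function.onFun, Set.disjoint_left]
      rintro x ⟨a, ha, rfl⟩ ⟨b, hb, hba⟩
      have habs : ∀ n, |tseq n| ≤ δ := fun n => by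
        rw [abs_of_pos (htpos n)]; exact htle n
      obtain ⟨hte, -⟩ := hinj (tseq j) (tseq i) (habs j) (habs i) b (hAU hb) a (hAU ha) hba
      exact hij (htinj hte.symm)
    have hμU : μ (⋃ n, φ.toFun (tseq n) '' A) = ∑' n, μ (φ.toFun (tseq n) '' A) :=
      measure_iUnion hPdis hPmeas
    have hconst : ∀ n : ℕ, μ (φ.toFun (tseq n) '' A) = μ A := fun n => hφinvim _ _
    rw [tsum_congr hconst, ENNReal.tsum_const_eq_top_of_ne_zero hA0ne] at hμU
    exact measure_ne_top μ _ hμU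
  -- slices are null
  have hslice : ∀ t : ℝ, μ (Φ '' ({t} ×ˢ A)) = 0 := by
    intro t
    have : Φ '' ({t} ×ˢ A) = φ.toFun t '' A := by
      rw [singleton_prod, image_image]
    rw [this, hφinvim]
    exact hA0
  -- translation invariance for Ico-tubes
  have htransIco : ∀ a b a' b' : ℝ, b - a = b' - a' →
      μ (Φ '' (Ico a b ×ˢ A)) = μ (Φ '' (Ico a' b' ×ˢ A)) := by
    intro a b a' b' hab
    set s : ℝ := a' - a with hs
    have hb' : b' = b + s := by rw [hs]; linarith
    have ha' : a' = a + s := by rw [hs]; ring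
    have hshift : Φ '' (Ico a' b' ×ˢ A) = φ.toFun s '' (Φ '' (Ico a b ×ˢ A)) := by
      rw [image_image]
      ext x
      simp only [mem_image, Set.mem_prod, mem_Ico, Prod.exists]
      constructor
      · rintro ⟨t, y, ⟨⟨ht1, ht2⟩, hy⟩, rfl⟩
        refine ⟨t - s, y, ⟨⟨by rw [ha'] at ht1; linarith, by rw [hb'] at ht2; linarith⟩, hy⟩, ?_⟩
        show φ.toFun s (φ.toFun (t - s) y) = Φ (t, y)
        rw [← φ.map_add']
        have he : s + (t - s) = t := by ring
        rw [he]
      · rintro ⟨t, y, ⟨⟨ht1, ht2⟩, hy⟩, rfl⟩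
        refine ⟨t + s, y, ⟨⟨by rw [ha']; linarith, by rw [hb']; linarith⟩, hy⟩, ?_⟩
        show Φ (t + s, y) = φ.toFun s (Φ (t, y))
        show φ.toFun (t + s) y = φ.toFun s (φ.toFun t y)
        rw [← φ.map_add', add_comm]
      
    rw [hshift, hφinvim]
  -- Icc tubes equal Ico tubes in measure
  have hIccIco : ∀ T' : ℝ, 0 < T' → T' ≤ δ →
      μ (Φ '' (Icc (-T') T' ×ˢ A)) = μ (Φ '' (Ico (-T') T' ×ˢ A)) := by
    intro T' hT' hT'δ
    apply le_antisymm
    · have he : Icc (-T') T' = Ico (-T') T' ∪ {T'} := (Ico_union_right (by linarith)).symm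
      rw [he, union_prod, image_union]
      calc μ (Φ '' (Ico (-T') T' ×ˢ A) ∪ Φ '' ({T'} ×ˢ A))
          ≤ μ (Φ '' (Ico (-T') T' ×ˢ A)) + μ (Φ '' ({T'} ×ˢ A)) := measure_union_le _ _
        _ = μ (Φ '' (Ico (-T') T' ×ˢ A)) := by rw [hslice T', add_zero]
    · exact measure_mono (image_mono (prod_mono Ico_subset_Icc_self subset_rfl))
  -- the length function
  set g : ℝ → ℝ≥0∞ := fun L => μ (Φ '' (Ico (-δ) (L - δ) ×ˢ A)) with hgdef
  have hgfin : ∀ L, g L ≠ ⊤ := fun L => measure_ne_top μ _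
  have hgadd : ∀ a b : ℝ, 0 ≤ a → 0 ≤ b → a + b ≤ 2 * δ → g (a + b) = g a + g b := by
    intro a b ha hb hab
    have h1 : -δ ≤ a - δ := by linarith
    have h2 : a - δ ≤ a + b - δ := by linarith
    have hsplitIco : Ico (-δ) (a + b - δ) = Ico (-δ) (a - δ) ∪ Ico (a - δ) (a + b - δ) :=
      (Ico_union_Ico_eq_Ico h1 h2).symm
    have hIsub1 : Ico (-δ) (a - δ) ⊆ Icc (-δ) δ := by
      intro t ht
      exact ⟨ht.1, by have := ht.2; simp only [mem_Ico] at *; linarith⟩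
    have hIsub2 : Ico (a - δ) (a + b - δ) ⊆ Icc (-δ) δ := by
      intro t ht
      simp only [mem_Ico, mem_Icc] at *
      constructor <;> linarith [ht.1, ht.2]
    have hG1 : MeasurableSet (Ico (-δ) (a - δ) ×ˢ A) := measurableSet_Ico.prod hA
    have hQZ : Φ '' (Ico (a - δ) (a + b - δ) ×ˢ A) ⊆ Z := by
      rw [hZdef]
      apply image_mono
      intro p hp
      exact ⟨hIsub2 hp.1, hAU hp.2⟩
    have hdisjQ : Φ '' (Ico (a - δ) (a + b - δ) ×ˢ A) ∩ Φ '' ((Ico (-δ) (a - δ) ×ˢ A) ∩ box) = ∅ := by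
      rw [hprodbox _ hIsub1]
      apply himdisj
      · intro p hp; exact ⟨hIsub2 hp.1, hAU hp.2⟩
      · intro p hp; exact ⟨hIsub1 hp.1, hAU hp.2⟩
      · rw [prod_inter_prod, inter_self]
        have hd : Ico (a - δ) (a + b - δ) ∩ Ico (-δ) (a - δ) = ∅ := by
          rw [inter_comm]
          exact (Set.Ico_disjoint_Ico_same).inter_eq
        rw [hd, empty_prod]
    have hsp := hsplit _ hG1 _ hQZ hdisjQ
    rw [hprodbox _ hIsub1] at hsp
    have hUn : Φ '' (Ico (-δ) (a + b - δ) ×ˢ A) =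
        Φ '' (Ico (-δ) (a - δ) ×ˢ A) ∪ Φ '' (Ico (a - δ) (a + b - δ) ×ˢ A) := by
      rw [hsplitIco, union_prod, image_union]
    show μ (Φ '' (Ico (-δ) (a + b - δ) ×ˢ A)) =
      μ (Φ '' (Ico (-δ) (a - δ) ×ˢ A)) + μ (Φ '' (Ico (-δ) (b - δ) ×ˢ A))
    rw [hUn, hsp]
    congr 1
    exact htransIco (a - δ) (a + b - δ) (-δ) (b - δ) (by ring)
  -- main linearity
  have hmain := stmt8_cauchy_linear g (2 * δ) (by linarith) hgfin hgadd (2 * T)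
    (by linarith) (by linarith)
  have htube : ∀ T' : ℝ, 0 < T' → T' ≤ δ → μ (Φ '' (Icc (-T') T' ×ˢ A)) = g (2 * T') := by
    intro T' h1 h2
    rw [hIccIco T' h1 h2]
    show μ (Φ '' (Ico (-T') T' ×ˢ A)) = μ (Φ '' (Ico (-δ) (2 * T' - δ) ×ˢ A))
    exact htransIco (-T') T' (-δ) (2 * T' - δ) (by ring)
  have hgoalset : (⋃ t ∈ Icc (-T) T, φ.toFun t '' A) = Φ '' (Icc (-T) T ×ˢ A) := by
    ext x
    simp only [mem_iUnion, mem_image, Set.mem_prod, exists_prop, Prod.exists]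
    constructor
    · rintro ⟨t, htI, a, haA, rfl⟩
      exact ⟨t, a, ⟨htI, haA⟩, rfl⟩
    · rintro ⟨t, a, ⟨htI, haA⟩, rfl⟩
      exact ⟨t, htI, a, haA, rfl⟩
  rw [hgoalset, htube T hT hTδ, hAbox, htube δ hδ le_rfl]
  have e1 : ENNReal.ofReal (1 / (2 * δ)) * ENNReal.ofReal (2 * δ) = 1 := by
    rw [← ENNReal.ofReal_mul (by positivity)]
    rw [show 1 / (2 * δ) * (2 * δ) = 1 by field_simp]
    exact ENNReal.ofReal_one
  have e2 : ENNReal.ofReal (1 / (2 * T)) * ENNReal.ofReal (2 * T) = 1 := by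
    rw [← ENNReal.ofReal_mul (by positivity)]
    rw [show 1 / (2 * T) * (2 * T) = 1 by field_simp]
    exact ENNReal.ofReal_one
  calc ENNReal.ofReal (1 / (2 * δ)) * g (2 * δ)
      = ENNReal.ofReal (1 / (2 * δ)) * (1 * g (2 * δ)) := by rw [one_mul]
    _ = ENNReal.ofReal (1 / (2 * δ)) *
        (ENNReal.ofReal (1 / (2 * T)) * ENNReal.ofReal (2 * T) * g (2 * δ)) := by rw [e2]
    _ = ENNReal.ofReal (1 / (2 * T)) *
        (ENNReal.ofReal (1 / (2 * δ)) * (ENNReal.ofReal (2 * T) * g (2 * δ))) := by ring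
    _ = ENNReal.ofReal (1 / (2 * T)) *
        (ENNReal.ofReal (1 / (2 * δ)) * (ENNReal.ofReal (2 * δ) * g (2 * T))) := by rw [hmain]
    _ = ENNReal.ofReal (1 / (2 * T)) *
        (ENNReal.ofReal (1 / (2 * δ)) * ENNReal.ofReal (2 * δ) * g (2 * T)) := by ring
    _ = ENNReal.ofReal (1 / (2 * T)) * g (2 * T) := by rw [e1, one_mul]
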